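/- Among all k-element sub-multisets of a sorted list x_1 ≤ ... ≤ x_n, a subset minimizing the population variance consists of k consecutive elements: there exists i with 0 ≤ i ≤ n−k such that the subset {x_{i+1},...,x_{i+k}} achieves the minimum variance over all k-element subsets. -/

import Mathlib

open Finset

/-- Population variance of the sub-multiset of `x` indexed by a finite index set `s`. -/
noncomputable def svar {n : ℕ} (x : Fin n → ℝ) (s : Finset (Fin n)) : ℝ :=
  (∑ i ∈ s, x i ^ 2) / s.card - ((∑ i ∈ s, x i) / s.card) ^ 2

lemma svar_exchange {n k : ℕ} (hk : 0 < k) (x : Fin n → ℝ) (s : Finset (Fin n))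
    (hs : s.card = k) (a : Fin n) (ha : a ∈ s) (b : Fin n) (hb : b ∉ s)
    (h : (x b - x a) * ((k - 1 : ℝ) * x b + (k + 1) * x a - 2 * ∑ i ∈ s, x i) ≤ 0) :
    svar x (insert b (s.erase a)) ≤ svar x s := by
  have hbe : b ∉ s.erase a := fun h' => hb (mem_of_mem_erase h')
  have hcard : (insert b (s.erase a)).card = k := by
    rw [card_insert_of_notMem hbe, card_erase_of_mem ha, hs]
    omega
  have hsum : ∑ i ∈ insert b (s.erase a), x i = (∑ i ∈ s, x i) - x a + x b := by
    rw [sum_insert hbe, sum_erase_eq_sub ha]; ring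
  have hsum2 : ∑ i ∈ insert b (s.erase a), x i ^ 2
      = (∑ i ∈ s, x i ^ 2) - x a ^ 2 + x b ^ 2 := by
    rw [sum_insert hbe, sum_erase_eq_sub ha]; ring
  have hkR : (0:ℝ) < k := by exact_mod_cast hk
  set S := ∑ i ∈ s, x i with hS
  set Q := ∑ i ∈ s, x i ^ 2 with hQ
  rw [svar, svar, hcard, hs, hsum, hsum2, ← hS, ← hQ]
  have e1 : (Q - x a ^ 2 + x b ^ 2) / k - ((S - x a + x b) / k) ^ 2
      = ((k : ℝ) * (Q - x a ^ 2 + x b ^ 2) - (S - x a + x b) ^ 2) / k ^ 2 := by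
    field_simp
  have e2 : Q / k - (S / k) ^ 2 = ((k : ℝ) * Q - S ^ 2) / k ^ 2 := by
    field_simp
  rw [e1, e2]
  have key : (k : ℝ) * (Q - x a ^ 2 + x b ^ 2) - (S - x a + x b) ^ 2
      ≤ (k : ℝ) * Q - S ^ 2 := by nlinarith [h]
  exact div_le_div_of_nonneg_right key (by positivity)


lemma window_of_consec {n k : ℕ} (hk : 0 < k) (s : Finset (Fin n))
    (hs : s.card = k) (hne : s.Nonempty)
    (hcons : ∀ j : Fin n, s.min' hne ≤ j → j ≤ s.max' hne → j ∈ s) :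
    ∃ i ≤ n - k, (univ.filter (fun j : Fin n => i ≤ (j : ℕ) ∧ (j : ℕ) < i + k)) = s := by
  set a := s.min' hne with ha
  set c := s.max' hne with hc
  have hIcc : s = Finset.Icc a c := by
    ext j
    simp only [Finset.mem_Icc]
    exact ⟨fun hj => ⟨s.min'_le j hj, s.le_max' j hj⟩, fun ⟨h1, h2⟩ => hcons j h1 h2⟩
  have hac : a ≤ c := s.min'_le c (s.max'_mem hne)
  have hcard : (c : ℕ) + 1 - (a : ℕ) = k := by
    rw [hIcc] at hs; rw [← hs, Fin.card_Icc]
  have hcn : (c : ℕ) < n := c.isLt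
  refine ⟨(a : ℕ), by omega, ?_⟩
  rw [hIcc]
  ext j
  simp only [mem_filter, mem_univ, true_and, Finset.mem_Icc, Fin.le_def]
  have hacn : (a : ℕ) ≤ (c : ℕ) := hac
  omega

lemma aux_window {n k : ℕ} (hk : 0 < k) (hkn : k < n) (x : Fin n → ℝ)
    (hmono : Monotone x) :
    ∀ d : ℕ, ∀ s : Finset (Fin n), s.card = k → ∀ hne : s.Nonempty,
      ((s.max' hne : ℕ) - (s.min' hne : ℕ)) ≤ d →
      ∃ i ≤ n - k,
        svar x (univ.filter (fun j : Fin n => i ≤ (j : ℕ) ∧ (j : ℕ) < i + k)) ≤ svar x s := by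
  intro d
  induction d with
  | zero =>
    intro s hs hne hw
    have hcons : ∀ j : Fin n, s.min' hne ≤ j → j ≤ s.max' hne → j ∈ s := by
      intro j h1 h2
      have h1' : ((s.min' hne : Fin n) : ℕ) ≤ (j : ℕ) := h1
      have h2' : (j : ℕ) ≤ ((s.max' hne : Fin n) : ℕ) := h2
      have hma : ((s.min' hne : Fin n) : ℕ) ≤ ((s.max' hne : Fin n) : ℕ) :=
        s.min'_le _ (s.max'_mem hne)
      have : j = s.min' hne := by
        apply Fin.ext; omega
      rw [this]; exact s.min'_mem hne
    obtain ⟨i, hi, heq⟩ := window_of_consec hk s hs hne hcons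
    exact ⟨i, hi, by rw [heq]⟩
  | succ d ih =>
    intro s hs hne hw
    by_cases hcons : ∀ j : Fin n, s.min' hne ≤ j → j ≤ s.max' hne → j ∈ s
    · obtain ⟨i, hi, heq⟩ := window_of_consec hk s hs hne hcons
      exact ⟨i, hi, by rw [heq]⟩
    · push_neg at hcons
      obtain ⟨b, hab, hbc, hbs⟩ := hcons
      set a := s.min' hne with haa
      set c := s.max' hne with hcc
      have hamem : a ∈ s := s.min'_mem hne
      have hcmem : c ∈ s := s.max'_mem hne
      have hab' : a < b := lt_of_le_of_ne hab (fun h => hbs (h ▸ hamem))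
      have hbc' : b < c := lt_of_le_of_ne hbc (fun h => hbs (h ▸ hcmem))
      have hxa : x a ≤ x b := hmono hab
      have hxc : x b ≤ x c := hmono hbc
      have hkR : (0:ℝ) < k := by exact_mod_cast hk
      set S := ∑ i ∈ s, x i with hSS
      have hdisj : (x b - x a) * ((k - 1 : ℝ) * x b + (k + 1) * x a - 2 * S) ≤ 0 ∨
          (x b - x c) * ((k - 1 : ℝ) * x b + (k + 1) * x c - 2 * S) ≤ 0 := by
        by_contra hcon
        push_neg at hcon
        obtain ⟨h1, h2⟩ := hcon
        have hA : 0 < (k - 1 : ℝ) * x b + (k + 1) * x a - 2 * S := by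
          rcases le_or_gt ((k - 1 : ℝ) * x b + (k + 1) * x a - 2 * S) 0 with h' | h'
          · exfalso; nlinarith
          · exact h'
        have hC : (k - 1 : ℝ) * x b + (k + 1) * x c - 2 * S < 0 := by
          rcases lt_or_ge ((k - 1 : ℝ) * x b + (k + 1) * x c - 2 * S) 0 with h' | h'
          · exact h'
          · exfalso; nlinarith
        nlinarith [hxa.trans hxc]
      rcases hdisj with hgood | hgood
      · -- replace a (the min) by b
        have hex := svar_exchange hk x s hs a hamem b hbs hgood
        set s' := insert b (s.erase a) with hs'
        have hne' : s'.Nonempty := ⟨b, mem_insert_self _ _⟩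
        have hcard' : s'.card = k := by
          rw [hs', card_insert_of_notMem (fun h' => hbs (mem_of_mem_erase h')),
            card_erase_of_mem hamem, hs]; omega
        have hlb : ∀ j ∈ s', a < j := by
          intro j hj
          rcases mem_insert.1 hj with h | h
          · exact h ▸ hab'
          · exact lt_of_le_of_ne (s.min'_le j (mem_of_mem_erase h))
              (fun he => (ne_of_mem_erase h) he.symm)
        have hub : ∀ j ∈ s', j ≤ c := by
          intro j hj
          rcases mem_insert.1 hj with h | h
          · exact h ▸ hbc
          · exact s.le_max' j (mem_of_mem_erase h)
        have h1 : (a : ℕ) < ((s'.min' hne') : ℕ) := hlb _ (s'.min'_mem hne')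
        have h2 : ((s'.max' hne') : ℕ) ≤ (c : ℕ) := hub _ (s'.max'_mem hne')
        obtain ⟨i, hi, hle⟩ := ih s' hcard' hne' (by omega)
        exact ⟨i, hi, hle.trans hex⟩
      · -- replace c (the max) by b
        have hex := svar_exchange hk x s hs c hcmem b hbs hgood
        set s' := insert b (s.erase c) with hs'
        have hne' : s'.Nonempty := ⟨b, mem_insert_self _ _⟩
        have hcard' : s'.card = k := by
          rw [hs', card_insert_of_notMem (fun h' => hbs (mem_of_mem_erase h')),
            card_erase_of_mem hcmem, hs]; omega
        have hlb : ∀ j ∈ s', a ≤ j := by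
          intro j hj
          rcases mem_insert.1 hj with h | h
          · exact h ▸ hab
          · exact s.min'_le j (mem_of_mem_erase h)
        have hub : ∀ j ∈ s', j < c := by
          intro j hj
          rcases mem_insert.1 hj with h | h
          · exact h ▸ hbc'
          · exact lt_of_le_of_ne (s.le_max' j (mem_of_mem_erase h)) (ne_of_mem_erase h)
        have h1 : (a : ℕ) ≤ ((s'.min' hne') : ℕ) := hlb _ (s'.min'_mem hne')
        have h2 : ((s'.max' hne') : ℕ) < (c : ℕ) := hub _ (s'.max'_mem hne')
        obtain ⟨i, hi, hle⟩ := ih s' hcard' hne' (by omega)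
        exact ⟨i, hi, hle.trans hex⟩

theorem min_variance_subset_consecutive {n k : ℕ} (hk : 0 < k) (hkn : k < n)
    (x : Fin n → ℝ) (hmono : Monotone x) :
    ∃ i ≤ n - k, ∀ s : Finset (Fin n), s.card = k →
      svar x (univ.filter (fun j : Fin n => i ≤ (j : ℕ) ∧ (j : ℕ) < i + k)) ≤ svar x s := by
  have hne0 : (Finset.powersetCard k (univ : Finset (Fin n))).Nonempty := by
    rw [Finset.powersetCard_nonempty]
    simpa using hkn.le
  obtain ⟨s₀, hs₀mem, hmin⟩ := Finset.exists_min_image _ (svar x) hne0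
  have hs₀ : s₀.card = k := (Finset.mem_powersetCard.1 hs₀mem).2
  have hne : s₀.Nonempty := Finset.card_pos.1 (hs₀ ▸ hk)
  obtain ⟨i, hi, hle⟩ := aux_window hk hkn x hmono
    ((s₀.max' hne : ℕ) - (s₀.min' hne : ℕ)) s₀ hs₀ hne le_rfl
  refine ⟨i, hi, fun s hsk => hle.trans (hmin s ?_)⟩
  exact Finset.mem_powersetCard.2 ⟨Finset.subset_univ s, hsk⟩
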